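/- Let V be a pseudovariety of semigroups containing Sl and satisfying N ⓜ V = V, let S be a member of V, and let {e} be a one-element semigroup. Then the natural mapping ι : S * {e} → S ∐^V {e} from the free product to the V-coproduct is injective. -/

import Mathlib

set_option autoImplicit false

/-! ### General notions: topological semigroups, pseudovarieties, pro-V semigroups -/

/-- Continuity of a map into a type regarded with the discrete topology. -/
def ContinuousDisc {S : Type} [TopologicalSpace S] {T : Type} (f : S → T) : Prop :=
  @Continuous S T _ ⊥ f

/-- A pseudovariety of semigroups: a class of finite semigroups closed under
homomorphic images, subsemigroups and finite direct products. -/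
structure Pseudovariety : Type 1 where
  Mem : ∀ (S : Type) [Semigroup S], Prop
  finite : ∀ (S : Type) [Semigroup S], Mem S → Finite S
  closed_hom : ∀ (S T : Type) [Semigroup S] [Semigroup T] (f : S →ₙ* T),
    Mem S → Function.Surjective f → Mem T
  closed_sub : ∀ (S T : Type) [Semigroup S] [Semigroup T] (f : T →ₙ* S),
    Mem S → Function.Injective f → Mem T
  closed_prod : ∀ (ι : Type) [Finite ι] (S : ι → Type) [∀ i, Semigroup (S i)],
    (∀ i, Mem (S i)) → Mem (∀ i, S i)

/-- A bundled member of a pseudovariety `V` (a finite semigroup belonging to `V`),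
always regarded as carrying the discrete topology. -/
structure SgrIn (V : Pseudovariety) : Type 1 where
  carrier : Type
  [str : Semigroup carrier]
  mem : V.Mem carrier

attribute [instance] SgrIn.str

/-- A (bundled) topological semigroup. -/
structure TopSgr : Type 1 where
  carrier : Type
  [str : Semigroup carrier]
  [top : TopologicalSpace carrier]

attribute [instance] TopSgr.str TopSgr.top

/-- A finite semigroup regarded as a topological semigroup with the discrete topology. -/
def discTopSgr (S : Type) [Semigroup S] : TopSgr :=
  @TopSgr.mk S _ ⊥

/-- A pro-V semigroup: a compact Hausdorff topological semigroup that is residually `V`. -/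
def IsProV (V : Pseudovariety) (S : TopSgr) : Prop :=
  CompactSpace S.carrier ∧ T2Space S.carrier ∧ ContinuousMul S.carrier ∧
    ∀ x y : S.carrier, x ≠ y → ∃ (F : SgrIn V) (f : S.carrier →ₙ* F.carrier),
      ContinuousDisc ⇑f ∧ f x ≠ f y

/-- A profinite semigroup: a compact Hausdorff totally disconnected topological semigroup. -/
def IsProfiniteSgr (S : TopSgr) : Prop :=
  CompactSpace S.carrier ∧ T2Space S.carrier ∧ TotallyDisconnectedSpace S.carrier ∧
    ContinuousMul S.carrier

/-- `C`, together with the continuous homomorphisms `φ i`, is a `V`-coproduct of the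
family `S` of pro-`V` semigroups. -/
structure IsCoproduct (V : Pseudovariety) {I : Type} (S : I → TopSgr)
    (C : TopSgr) (φ : ∀ i, (S i).carrier →ₙ* C.carrier) : Prop where
  proV : IsProV V C
  cont : ∀ i, Continuous ⇑(φ i)
  universal : ∀ (T : TopSgr), IsProV V T →
    ∀ ψ : ∀ i, (S i).carrier →ₙ* T.carrier, (∀ i, Continuous ⇑(ψ i)) →
      ∃! Ψ : C.carrier →ₙ* T.carrier, Continuous ⇑Ψ ∧ ∀ i, Ψ.comp (φ i) = ψ i

/-- `P`, together with the homomorphisms `e i`, is a free product (coproduct in the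
category of semigroups) of the family `S`. -/
structure IsFreeProduct {I : Type} (S : I → Type) [∀ i, Semigroup (S i)]
    (P : Type) [Semigroup P] (e : ∀ i, S i →ₙ* P) : Prop where
  universal : ∀ (T : Type) [Semigroup T] (f : ∀ i, S i →ₙ* T),
    ∃! F : P →ₙ* T, ∀ i, F.comp (e i) = f i

/-! ### Particular pseudovarieties and related notions -/

/-- `V` contains the pseudovariety `Sl` of finite semilattices. -/
def ContainsSl (V : Pseudovariety) : Prop :=
  ∀ (S : Type) [Semigroup S] [Finite S],
    (∀ x y : S, x * y = y * x) → (∀ x : S, x * x = x) → V.Mem S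

/-- Green's `J`-preorder: `s ≤_J t`, i.e. `s ∈ S^I t S^I`. -/
def JBelow {S : Type} [Semigroup S] (s t : S) : Prop :=
  ∃ x y : WithOne S, x * (t : WithOne S) * y = (s : WithOne S)

/-- `V` contains the pseudovariety `J` of finite `J`-trivial semigroups. -/
def ContainsJ (V : Pseudovariety) : Prop :=
  ∀ (S : Type) [Semigroup S] [Finite S],
    (∀ s t : S, JBelow s t → JBelow t s → s = t) → V.Mem S

/-- The preimage of an idempotent under a semigroup homomorphism, as a subsemigroup. -/
def fiberSub {S T : Type} [Semigroup S] [Semigroup T] (ψ : S →ₙ* T) (e : T)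
    (he : e * e = e) : Subsemigroup S where
  carrier := ⇑ψ ⁻¹' {e}
  mul_mem' := by
    intro a b ha hb
    simp only [Set.mem_preimage, Set.mem_singleton_iff] at *
    rw [map_mul, ha, hb, he]

/-- The set of products of `n+1` elements of a semigroup (so `nthProds S 0 = S`). -/
def nthProds (S : Type) [Semigroup S] : ℕ → Set S
  | 0 => Set.univ
  | n + 1 => {x | ∃ a y, y ∈ nthProds S n ∧ x = a * y}

/-- A nilpotent semigroup: it has a zero `z` and some power of the semigroup is `{z}`. -/
def IsNilpotentSgr (S : Type) [Semigroup S] : Prop :=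
  ∃ z : S, (∀ x : S, z * x = z ∧ x * z = z) ∧ ∃ n : ℕ, nthProds S n ⊆ {z}

/-- A generator of the Mal'cev product `N ⓜ V`: a finite semigroup admitting a surjective
homomorphism onto a member of `V` all of whose idempotent fibers are nilpotent. -/
def NMalcevGen (V : Pseudovariety) (S : Type) [Semigroup S] : Prop :=
  Finite S ∧ ∃ (T : SgrIn V) (ψ : S →ₙ* T.carrier), Function.Surjective ψ ∧
    ∀ (e : T.carrier) (he : e * e = e), IsNilpotentSgr (fiberSub ψ e he)

/-- The equality `N ⓜ V = V`: `V` coincides with the smallest pseudovariety containing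
all finite semigroups admitting an `N`-morphism onto some member of `V`. -/
def NMalcevFixed (V : Pseudovariety) : Prop :=
  ∀ (S : Type) [Semigroup S] [Finite S],
    V.Mem S ↔ ∀ U : Pseudovariety,
      (∀ (S' : Type) [Semigroup S'], NMalcevGen V S' → U.Mem S') → U.Mem S

/-- A completely simple semigroup: simple with a primitive idempotent. -/
def IsCompletelySimple (S : Type) [Semigroup S] : Prop :=
  (∀ J : Set S, J.Nonempty → (∀ s x : S, x ∈ J → s * x ∈ J ∧ x * s ∈ J) → J = Set.univ) ∧
  ∃ e : S, e * e = e ∧ ∀ f : S, f * f = f → e * f = f → f * e = f → f = e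

/-- An equidivisible semigroup. -/
def Equidivisible (S : Type) [Semigroup S] : Prop :=
  ∀ u v x y : S, u * v = x * y →
    ∃ t : WithOne S,
      ((x : WithOne S) = (u : WithOne S) * t ∧ t * (y : WithOne S) = (v : WithOne S)) ∨
      ((x : WithOne S) * t = (u : WithOne S) ∧ (y : WithOne S) = t * (v : WithOne S))

/-! ### The two-sided Karnofsky–Rhodes expansion -/

/-- Vertices of the two-sided Cayley graph of `T`: pairs of elements of `T^I`. -/
abbrev KRVtx (T : Type) : Type := WithOne T × WithOne T

/-- Edges of the two-sided Cayley graph: (source, label, target). -/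
abbrev KREdge (A T : Type) : Type := KRVtx T × A × KRVtx T

/-- The image in `T^I` of a letter. -/
def letterImg {A T : Type} [Semigroup T] (ψ : FreeSemigroup A →ₙ* T) (a : A) : WithOne T :=
  (ψ (FreeSemigroup.of a) : WithOne T)

/-- The image in `T^I` of a (possibly empty) word. -/
def wordImg {A T : Type} [Semigroup T] (ψ : FreeSemigroup A →ₙ* T) (w : List A) : WithOne T :=
  (w.map (letterImg ψ)).prod

/-- `e` is an edge of the two-sided Cayley graph `Γ_ψ`. -/
def IsKREdge {A T : Type} [Semigroup T] (ψ : FreeSemigroup A →ₙ* T) (e : KREdge A T) : Prop :=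
  e.1.1 * letterImg ψ e.2.1 = e.2.2.1 ∧ e.1.2 = letterImg ψ e.2.1 * e.2.2.2

/-- One step along an edge of `Γ_ψ` (used to define directed paths). -/
def KRStep {A T : Type} [Semigroup T] (ψ : FreeSemigroup A →ₙ* T) (v w : KRVtx T) : Prop :=
  ∃ a : A, v.1 * letterImg ψ a = w.1 ∧ v.2 = letterImg ψ a * w.2

/-- A transition edge of `Γ_ψ`: an edge from whose target there is no directed path
back to its source. -/
def IsTransEdge {A T : Type} [Semigroup T] (ψ : FreeSemigroup A →ₙ* T) (e : KREdge A T) : Prop :=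
  IsKREdge ψ e ∧ ¬ Relation.ReflTransGen (KRStep ψ) e.2.2 e.1

/-- The list of letters of an element of the free semigroup. -/
def letters {A : Type} (u : FreeSemigroup A) : List A := u.head :: u.tail

/-- The set of edges of the path `p_u` of `Γ_ψ` from `(I, ψ u)` to `(ψ u, I)` labeled by `u`. -/
def pathEdges {A T : Type} [Semigroup T] (ψ : FreeSemigroup A →ₙ* T) (u : FreeSemigroup A) :
    Set (KREdge A T) :=
  {e | ∃ (w₁ w₂ : List A) (a : A), letters u = w₁ ++ a :: w₂ ∧
    e = ((wordImg ψ w₁, wordImg ψ (a :: w₂)), a, (wordImg ψ (w₁ ++ [a]), wordImg ψ w₂))}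

/-- The set `T(p_u)` of transition edges of `Γ_ψ` occurring in the path `p_u`. -/
def transEdges {A T : Type} [Semigroup T] (ψ : FreeSemigroup A →ₙ* T) (u : FreeSemigroup A) :
    Set (KREdge A T) :=
  {e ∈ pathEdges ψ u | IsTransEdge ψ e}

/-- A realization of the two-sided Karnofsky–Rhodes expansion of `ψ : A⁺ → T`:
a semigroup `K = T_ψ^KR` together with the projection `ψ^KR : A⁺ → K`, which is onto and
identifies `u` and `v` exactly when `ψ u = ψ v` and `T(p_u) = T(p_v)`, and the canonical
homomorphism `π : T_ψ^KR → T` with `π ∘ ψ^KR = ψ`. -/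
structure KRExp {A T : Type} [Semigroup T] (ψ : FreeSemigroup A →ₙ* T) : Type 1 where
  K : Type
  [strK : Semigroup K]
  [finK : Finite K]
  ψKR : FreeSemigroup A →ₙ* K
  π : K →ₙ* T
  surj : Function.Surjective ⇑ψKR
  ker : ∀ u v : FreeSemigroup A, ψKR u = ψKR v ↔
    (ψ u = ψ v ∧ transEdges ψ u = transEdges ψ v)
  proj : π.comp ψKR = ψ

attribute [instance] KRExp.strK KRExp.finK

/-- The data of a two-sided Karnofsky–Rhodes expansion of a finite semigroup `T`:
a finite alphabet `A`, an onto homomorphism `ψ : A⁺ → T`, and a realization `T_ψ^KR`. -/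
structure KRData (T : Type) [Semigroup T] : Type 1 where
  A : Type
  [finA : Finite A]
  ψ : FreeSemigroup A →ₙ* T
  surjψ : Function.Surjective ⇑ψ
  E : KRExp ψ

attribute [instance] KRData.finA

/-- `V` is closed under two-sided Karnofsky–Rhodes expansion. -/
def ClosedUnderKR (V : Pseudovariety) : Prop :=
  ∀ (A T : Type) [Finite A] [Semigroup T], V.Mem T →
    ∀ (ψ : FreeSemigroup A →ₙ* T), Function.Surjective ⇑ψ →
      ∀ E : KRExp ψ, V.Mem E.K

/-! ### KR-covers -/

/-- `S` is a KR-cover of the finite semigroup `T`. -/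
def IsKRCoverOf (S : TopSgr) (T : Type) [Semigroup T] [Finite T] : Prop :=
  (∃ φ : S.carrier →ₙ* T, ContinuousDisc ⇑φ ∧ Function.Surjective ⇑φ) ∧
  ∀ φ : S.carrier →ₙ* T, ContinuousDisc ⇑φ → Function.Surjective ⇑φ →
    ∃ (D : KRData T) (φψ : S.carrier →ₙ* D.E.K),
      ContinuousDisc ⇑φψ ∧ D.E.π.comp φψ = φ

/-- `S` is a KR-cover: a KR-cover of each of its finite continuous homomorphic images. -/
def IsKRCover (S : TopSgr) : Prop :=
  ∀ (T : Type) [Semigroup T] [Finite T],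
    (∃ φ : S.carrier →ₙ* T, ContinuousDisc ⇑φ ∧ Function.Surjective ⇑φ) →
    IsKRCoverOf S T

/-- `S` is `V`-projective. -/
def IsVProjective (V : Pseudovariety) (S : TopSgr) : Prop :=
  IsProV V S ∧ ∀ (T R : TopSgr), IsProV V T → IsProV V R →
    ∀ (f : S.carrier →ₙ* T.carrier) (g : R.carrier →ₙ* T.carrier),
      Continuous ⇑f → Continuous ⇑g → Function.Surjective ⇑g →
        ∃ f' : S.carrier →ₙ* R.carrier, Continuous ⇑f' ∧ g.comp f' = f

/-! ### Strong KR-covers and letter super-cancellativity -/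

/-- `κ : A → S` is a generating mapping: its image generates a dense subsemigroup. -/
def GeneratingMap {A : Type} (S : TopSgr) (κ : A → S.carrier) : Prop :=
  Dense (Subsemigroup.closure (Set.range κ) : Set S.carrier)

/-- The homomorphism `A⁺ → T` extending `a ↦ φ (κ a)`. -/
def liftGen {A : Type} (S : TopSgr) (κ : A → S.carrier) {T : Type} [Semigroup T]
    (φ : S.carrier →ₙ* T) : FreeSemigroup A →ₙ* T :=
  FreeSemigroup.lift (fun a => φ (κ a))

/-- `S` is a strong KR-cover of the finite semigroup `T` with respect to the
generating mapping `κ`. -/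
def IsStrongKRCoverOfWrt {A : Type} (S : TopSgr) (κ : A → S.carrier)
    (T : Type) [Semigroup T] [Finite T] : Prop :=
  ∀ φ : S.carrier →ₙ* T, ContinuousDisc ⇑φ → Function.Surjective ⇑φ →
    ∃ (E : KRExp (liftGen S κ φ)) (φκ : S.carrier →ₙ* E.K),
      ContinuousDisc ⇑φκ ∧ E.π.comp φκ = φ ∧
      ∀ a : A, φκ (κ a) = E.ψKR (FreeSemigroup.of a)

/-- `S` is a strong KR-cover of the finite semigroup `T` (with respect to some
generating mapping with finite domain). -/
def IsStrongKRCoverOf (S : TopSgr) (T : Type) [Semigroup T] [Finite T] : Prop :=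
  ∃ A : Type, Finite A ∧ ∃ κ : A → S.carrier, GeneratingMap S κ ∧
    IsStrongKRCoverOfWrt S κ T

/-- `S` is a strong KR-cover: a strong KR-cover of each of its finite continuous
homomorphic images. -/
def IsStrongKRCover (S : TopSgr) : Prop :=
  ∀ (T : Type) [Semigroup T] [Finite T],
    (∃ φ : S.carrier →ₙ* T, ContinuousDisc ⇑φ ∧ Function.Surjective ⇑φ) →
    IsStrongKRCoverOf S T

/-- `S` is letter super-cancellative with respect to the subset `A` of `S`. -/
def IsLSC (S : TopSgr) (A : Set S.carrier) : Prop :=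
  ∀ a ∈ A, ∀ b ∈ A, ∀ u v : WithOne S.carrier,
    (u * (a : WithOne S.carrier) = v * (b : WithOne S.carrier) → a = b ∧ u = v) ∧
    ((a : WithOne S.carrier) * u = (b : WithOne S.carrier) * v → a = b ∧ u = v)

/-! ### `S^I` and inverse limits -/

/-- The sum topology on `S^I = S ∪ {I}`: the point `I` is isolated and `S` keeps
its topology. -/
def withOneTopology (S : Type) [TopologicalSpace S] : TopologicalSpace (WithOne S) where
  IsOpen V := IsOpen ((fun s : S => (s : WithOne S)) ⁻¹' V)
  isOpen_univ := by simp
  isOpen_inter := by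
    intro U V hU hV
    rw [Set.preimage_inter]
    exact hU.inter hV
  isOpen_sUnion := by
    intro s hs
    rw [Set.preimage_sUnion]
    exact isOpen_biUnion hs

/-- `S^I` as a topological semigroup (in fact a monoid): `S` with an isolated identity
adjoined. -/
def withOneTopSgr (S : TopSgr) : TopSgr :=
  @TopSgr.mk (WithOne S.carrier) _ (withOneTopology S.carrier)

/-- The inverse limit of a family of topological semigroups, as a subsemigroup of
the product. -/
def invLimSub {I : Type} [Preorder I] (S : I → TopSgr)
    (f : ∀ i j, j ≤ i → ((S i).carrier →ₙ* (S j).carrier)) :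
    Subsemigroup (∀ i, (S i).carrier) where
  carrier := {x | ∀ i j (h : j ≤ i), f i j h (x i) = x j}
  mul_mem' := by
    intro a b ha hb i j h
    simp only [Pi.mul_apply, map_mul, ha i j h, hb i j h]

/-- The inverse limit as a topological semigroup (with the topology induced from the
product topology). -/
def invLimTopSgr {I : Type} [Preorder I] (S : I → TopSgr)
    (f : ∀ i j, j ≤ i → ((S i).carrier →ₙ* (S j).carrier)) : TopSgr :=
  TopSgr.mk (invLimSub S f)
namespace FPAux

variable {S : Type} [Semigroup S]

/-- merge two nonempty lists, multiplying last of first into head of second. -/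
def merge : List S → List S → List S
  | [], l' => l'
  | [x], [] => [x]
  | [x], y :: t => (x * y) :: t
  | x :: y :: xs, l' => x :: merge (y :: xs) l'

lemma merge_ne_nil {l l' : List S} (h : l' ≠ []) : merge l l' ≠ [] := by
  match l, l' with
  | [], l' => simpa [merge]
  | [x], y :: t => simp [merge]
  | x :: y :: xs, l' => simp [merge]

lemma merge_cons_of_ne {m : List S} (hm : m ≠ []) (x : S) (l : List S) :
    merge (x :: m) l = x :: merge m l := by
  match m with
  | y :: t => rfl

lemma merge_assoc {l₂ : List S} (h₂ : l₂ ≠ []) :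
    ∀ (l₁ l₃ : List S), merge (merge l₁ l₂) l₃ = merge l₁ (merge l₂ l₃) := by
  intro l₁
  induction l₁ with
  | nil => intro l₃; simp [merge]
  | cons x xs ih =>
    intro l₃
    match xs with
    | [] =>
      match l₂ with
      | y :: t =>
        match t with
        | [] =>
          match l₃ with
          | [] => simp [merge]
          | z :: r => simp [merge, mul_assoc]
        | u :: t' => simp [merge]
    | y :: xs' =>
      have hmn : merge (y :: xs') l₂ ≠ [] := merge_ne_nil h₂
      rw [merge_cons_of_ne (by simp) x, merge_cons_of_ne hmn x, ih,
        merge_cons_of_ne (show (y :: xs' : List S) ≠ [] by simp) x]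

lemma merge_append_left {l₂ : List S} (h₂ : l₂ ≠ []) :
    ∀ (l₁ l₃ : List S), merge (l₁ ++ l₂) l₃ = l₁ ++ merge l₂ l₃ := by
  intro l₁
  induction l₁ with
  | nil => intro l₃; simp
  | cons x xs ih =>
    intro l₃
    have : xs ++ l₂ ≠ [] := by simp [h₂]
    rw [List.cons_append, merge_cons_of_ne this x, ih, List.cons_append]

lemma merge_append_right {l₂ : List S} (h₂ : l₂ ≠ []) :
    ∀ (l₁ l₃ : List S), merge l₁ (l₂ ++ l₃) = merge l₁ l₂ ++ l₃ := by
  intro l₁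
  induction l₁ with
  | nil => intro l₃; simp [merge]
  | cons x xs ih =>
    intro l₃
    match xs with
    | [] =>
      match l₂ with
      | y :: t => simp [merge]
    | y :: xs' =>
      rw [merge_cons_of_ne (by simp) x, merge_cons_of_ne (by simp) x, ih,
        List.cons_append]

lemma merge_length : ∀ {l l' : List S}, l ≠ [] → l' ≠ [] →
    (merge l l').length + 1 = l.length + l'.length := by
  intro l
  induction l with
  | nil => intro l' h; simp at h
  | cons x xs ih =>
    intro l' _ h'
    match xs with
    | [] =>
      match l' with
      | y :: t => simp [merge]; omega
    | y :: xs' =>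
      rw [merge_cons_of_ne (by simp) x]
      have := ih (l' := l') (by simp) h'
      simp only [List.length_cons] at *
      omega

end FPAux
set_option linter.unusedSectionVars false
set_option linter.unusedVariables false

namespace FPAux

variable {S : Type} [Semigroup S]

/-- Model of the free product `S * {e}`: `e` or a word `e^a s₁ e s₂ ⋯ sₙ e^b`. -/
inductive M (S : Type) : Type
  | e : M S
  | w : Bool → S → List S → Bool → M S

namespace M

def letters : M S → List S
  | e => []
  | w _ h t _ => h :: t

def fa : M S → Bool
  | e => true
  | w a _ _ _ => a

def fb : M S → Bool
  | e => true
  | w _ _ _ b => b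

def wcons (a : Bool) : List S → Bool → M S
  | [], _ => e
  | h :: t, b => w a h t b

lemma letters_wcons (a : Bool) (l : List S) (b : Bool) : (wcons a l b).letters = l := by
  cases l <;> rfl

lemma fa_wcons {l : List S} (hl : l ≠ []) (a b : Bool) : (wcons a l b).fa = a := by
  cases l with
  | nil => exact absurd rfl hl
  | cons x t => rfl

lemma fb_wcons {l : List S} (hl : l ≠ []) (a b : Bool) : (wcons a l b).fb = b := by
  cases l with
  | nil => exact absurd rfl hl
  | cons x t => rfl

lemma eq_e_of_letters {u : M S} (h : u.letters = []) : u = e := by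
  cases u with
  | e => rfl
  | w a h' t b => simp [letters] at h

lemma letters_ne_nil_of_fa {u : M S} (h : u.fa = false) : u.letters ≠ [] := by
  cases u with
  | e => simp [fa] at h
  | w a h' t b => simp [letters]

lemma letters_ne_nil_of_fb {u : M S} (h : u.fb = false) : u.letters ≠ [] := by
  cases u with
  | e => simp [fb] at h
  | w a h' t b => simp [letters]

lemma ext_of {u v : M S} (h1 : u.fa = v.fa) (h2 : u.letters = v.letters)
    (h3 : u.fb = v.fb) : u = v := by
  cases u with
  | e =>
    cases v with
    | e => rfl
    | w a h' t b => simp [letters] at h2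
  | w a h' t b =>
    cases v with
    | e => simp [letters] at h2
    | w a' h'' t' b' =>
      simp only [letters, fa, fb, List.cons.injEq] at h1 h2 h3
      rw [h1, h2.1, h2.2, h3]

def mmul : M S → M S → M S
  | e, e => e
  | e, w a h t b => w true h t b
  | w a h t b, e => w a h t true
  | w a h t b, w a' h' t' b' =>
    if (b || a') = true then w a h (t ++ h' :: t') b'
    else wcons a (merge (h :: t) (h' :: t')) b'

instance : Mul (M S) := ⟨mmul⟩

lemma mul_def (u v : M S) : u * v = mmul u v := rfl

lemma mul_ee : (e : M S) * e = e := rfl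
lemma mul_ew (a : Bool) (h : S) (t : List S) (b : Bool) :
    (e : M S) * w a h t b = w true h t b := rfl
lemma mul_we (a : Bool) (h : S) (t : List S) (b : Bool) :
    w a h t b * (e : M S) = w a h t true := rfl
lemma mul_ww (a : Bool) (h : S) (t : List S) (b a' : Bool) (h' : S) (t' : List S) (b' : Bool) :
    w a h t b * w a' h' t' b' =
      if (b || a') = true then w a h (t ++ h' :: t') b'
      else wcons a (merge (h :: t) (h' :: t')) b' := rfl

lemma letters_mul (u v : M S) : (u * v).letters =
    if (u.fb || v.fa) = true then u.letters ++ v.letters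
    else merge u.letters v.letters := by
  cases u with
  | e => cases v with
    | e => rfl
    | w a h t b => rfl
  | w a h t b => cases v with
    | e => rw [mul_we]; rw [if_pos (by simp [fa])]; simp [letters]
    | w a' h' t' b' =>
      rw [mul_ww]
      show _ = if (b || a') = true then _ else _
      by_cases hc : (b || a') = true
      · rw [if_pos hc, if_pos hc]; rfl
      · rw [if_neg hc, if_neg hc, letters_wcons]; rfl

lemma fa_mul (u v : M S) : (u * v).fa = u.fa := by
  cases u with
  | e => cases v with
    | e => rfl
    | w a h t b => rfl
  | w a h t b => cases v with
    | e => rfl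
    | w a' h' t' b' =>
      rw [mul_ww]
      by_cases hc : (b || a') = true
      · rw [if_pos hc]; rfl
      · rw [if_neg hc, fa_wcons (merge_ne_nil (by simp))]; rfl

lemma fb_mul (u v : M S) : (u * v).fb = v.fb := by
  cases u with
  | e => cases v with
    | e => rfl
    | w a h t b => rfl
  | w a h t b => cases v with
    | e => rfl
    | w a' h' t' b' =>
      rw [mul_ww]
      by_cases hc : (b || a') = true
      · rw [if_pos hc]; rfl
      · rw [if_neg hc, fb_wcons (merge_ne_nil (by simp))]; rfl

instance : Semigroup (M S) where
  mul_assoc u v t := by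
    apply ext_of
    · rw [fa_mul (u*v) t, fa_mul u v, fa_mul u (v*t)]
    · rw [letters_mul (u * v) t, letters_mul u v, letters_mul u (v * t),
        letters_mul v t, fb_mul u v, fa_mul v t]
      by_cases h1 : (u.fb || v.fa) = true
      · by_cases h2 : (v.fb || t.fa) = true
        · rw [if_pos h1, if_pos h2, if_pos h1, if_pos h2, List.append_assoc]
        · have hv : v.letters ≠ [] :=
            letters_ne_nil_of_fb (by revert h2; cases v.fb <;> simp)
          rw [if_pos h1, if_neg h2, if_pos h1, if_neg h2, merge_append_left hv]
      · have hv : v.letters ≠ [] :=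
          letters_ne_nil_of_fa (by revert h1; cases v.fa <;> simp)
        by_cases h2 : (v.fb || t.fa) = true
        · rw [if_neg h1, if_pos h2, if_neg h1, if_pos h2, merge_append_right hv]
        · rw [if_neg h1, if_neg h2, if_neg h1, if_neg h2, merge_assoc hv]
    · rw [fb_mul (u*v) t, fb_mul u (v*t), fb_mul v t]

/-- number of `S`-letters -/
def len (u : M S) : ℕ := u.letters.length

lemma len_bounds (u v : M S) : len (u * v) ≤ len u + len v ∧
    len u + len v ≤ len (u * v) + 1 ∧ len u ≤ len (u * v) ∧ len v ≤ len (u * v) := by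
  unfold len
  rw [letters_mul]
  by_cases hc : (u.fb || v.fa) = true
  · rw [if_pos hc]; simp
  · rw [if_neg hc]
    have hv : v.letters ≠ [] := letters_ne_nil_of_fa (by revert hc; cases v.fa <;> simp)
    have hu : u.letters ≠ [] := letters_ne_nil_of_fb (by revert hc; cases u.fb <;> simp)
    have h1 := merge_length hu hv
    have h2 : u.letters.length ≠ 0 := by simp [hu]
    have h3 : v.letters.length ≠ 0 := by simp [hv]
    omega

lemma len_mul_le (u v : M S) : len (u * v) ≤ len u + len v := (len_bounds u v).1
lemma len_mul_ge (u v : M S) : len u + len v ≤ len (u * v) + 1 := (len_bounds u v).2.1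
lemma len_le_len_mul_left (u v : M S) : len u ≤ len (u * v) := (len_bounds u v).2.2.1
lemma len_le_len_mul_right (u v : M S) : len v ≤ len (u * v) := (len_bounds u v).2.2.2

/-- canonical embedding of `S` -/
def jS : S →ₙ* M S where
  toFun s := w false s [] false
  map_mul' s s' := by
    rw [mul_ww, if_neg (by simp)]
    rfl

end M
end FPAux
namespace FPAux
namespace M

variable {S : Type} [Semigroup S] {U : Type} [Semigroup U]

/-- `f s₁ · (g₀ f s₂) ⋯ (g₀ f sₙ)` in `(WithOne U)`. -/
def coreL (f : S →ₙ* U) (g0 : U) : List S → WithOne U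
  | [] => 1
  | s :: t => (↑(f s) : WithOne U) * (t.map fun x => ((g0 : WithOne U) * ↑(f x))).prod

lemma coreL_eq (f : S →ₙ* U) (g0 : U) {l : List S} (hl : l ≠ []) :
    (l.map fun x => ((g0 : WithOne U) * ↑(f x))).prod = ↑g0 * coreL f g0 l := by
  match l with
  | s :: t => simp [coreL, mul_assoc]

lemma coreL_append (f : S →ₙ* U) (g0 : U) {l l' : List S} (hl : l ≠ []) (hl' : l' ≠ []) :
    coreL f g0 (l ++ l') = coreL f g0 l * ↑g0 * coreL f g0 l' := by
  match l, l' with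
  | s :: t, s' :: t' =>
    simp [coreL, mul_assoc, coreL_eq f g0 (show (s' :: t' : List S) ≠ [] by simp)]

lemma coreL_merge (f : S →ₙ* U) (g0 : U) :
    ∀ {l l' : List S}, l ≠ [] → l' ≠ [] →
    coreL f g0 (merge l l') = coreL f g0 l * coreL f g0 l' := by
  intro l
  induction l with
  | nil => intro l' h _; exact absurd rfl h
  | cons x xs ih =>
    intro l' _ hl'
    match xs with
    | [] =>
      match l' with
      | s' :: t' =>
        show coreL f g0 ((x * s') :: t') = _
        simp [coreL, map_mul, mul_assoc]
    | y :: xs' =>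
      rw [merge_cons_of_ne (by simp) x]
      have hm : merge (y :: xs') l' ≠ [] := merge_ne_nil hl'
      match hM : merge (y :: xs') l' with
      | [] => exact absurd hM hm
      | z :: m =>
        show (↑(f x) : WithOne U) * ((z :: m).map fun s => ((g0 : WithOne U) * ↑(f s))).prod = _
        rw [coreL_eq f g0 (show (z :: m : List S) ≠ [] by simp), ← hM,
          ih (by simp) hl']
        show _ = (↑(f x) : WithOne U) * ((y :: xs').map fun s => ((g0 : WithOne U) * ↑(f s))).prod * _
        rw [coreL_eq f g0 (show (y :: xs' : List S) ≠ [] by simp)]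
        simp [mul_assoc]

def eF (g0 : U) : Bool → WithOne U := fun c => bif c then ↑g0 else 1

lemma eF_true (g0 : U) : eF g0 true = (↑g0 : WithOne U) := rfl
lemma eF_false (g0 : U) : eF g0 false = (1 : WithOne U) := rfl
lemma coreL_nil (f : S →ₙ* U) (g0 : U) : coreL f g0 [] = 1 := rfl

def LiftFun (f : S →ₙ* U) (g0 : U) (m : M S) : WithOne U :=
  eF g0 m.fa * coreL f g0 m.letters * eF g0 m.fb

lemma eF_mid (g0 : U) (hg : g0 * g0 = g0) {c c' : Bool} (h : (c || c') = true) :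
    eF g0 c * eF g0 c' = ↑g0 := by
  cases c <;> cases c' <;> simp_all [eF] <;>
    first
      | rfl
      | (rw [← WithOne.coe_mul, hg])

lemma g0_eF (g0 : U) (hg : g0 * g0 = g0) (c : Bool) :
    (↑g0 : WithOne U) * eF g0 c = ↑g0 := by
  cases c <;> simp [eF] <;> rw [← WithOne.coe_mul, hg]

lemma eF_g0 (g0 : U) (hg : g0 * g0 = g0) (c : Bool) :
    eF g0 c * (↑g0 : WithOne U) = ↑g0 := by
  cases c <;> simp [eF] <;> rw [← WithOne.coe_mul, hg]

/-- The lift of `f` and an idempotent `g0` to a homomorphism `M S →ₙ* WithOne U`. -/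
def liftHom (f : S →ₙ* U) (g0 : U) (hg : g0 * g0 = g0) : M S →ₙ* WithOne U where
  toFun := LiftFun f g0
  map_mul' u v := by
    unfold LiftFun
    rw [fa_mul, fb_mul, letters_mul]
    by_cases hc : (u.fb || v.fa) = true
    · rw [if_pos hc]
      by_cases hu : u.letters = []
      · have hue : u = M.e := eq_e_of_letters hu
        subst hue
        have hgg : (↑g0 : WithOne U) * ↑g0 = ↑g0 := by rw [← WithOne.coe_mul, hg]
        show eF g0 true * coreL f g0 ([] ++ v.letters) * eF g0 v.fb =
          eF g0 true * coreL f g0 [] * eF g0 true *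
            (eF g0 v.fa * coreL f g0 v.letters * eF g0 v.fb)
        simp only [List.nil_append, eF_true, coreL_nil, mul_one]
        rw [hgg, ← mul_assoc, ← mul_assoc, g0_eF g0 hg]
      · by_cases hv : v.letters = []
        · have hve : v = M.e := eq_e_of_letters hv
          subst hve
          have hgg : (↑g0 : WithOne U) * ↑g0 = ↑g0 := by rw [← WithOne.coe_mul, hg]
          show eF g0 u.fa * coreL f g0 (u.letters ++ []) * eF g0 true =
            eF g0 u.fa * coreL f g0 u.letters * eF g0 u.fb *
              (eF g0 true * coreL f g0 [] * eF g0 true)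
          simp only [List.append_nil, eF_true, coreL_nil, mul_one]
          rw [hgg, mul_assoc (eF g0 u.fa * coreL f g0 u.letters) (eF g0 u.fb) (↑g0 : WithOne U),
            eF_g0 g0 hg]
        · rw [coreL_append f g0 hu hv]
          rw [show eF g0 u.fa * coreL f g0 u.letters * eF g0 u.fb *
              (eF g0 v.fa * coreL f g0 v.letters * eF g0 v.fb) =
              eF g0 u.fa * coreL f g0 u.letters * (eF g0 u.fb * eF g0 v.fa) *
              coreL f g0 v.letters * eF g0 v.fb by simp [mul_assoc]]
          rw [eF_mid g0 hg hc]
          simp [mul_assoc]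
    · rw [if_neg hc]
      have hbu : u.fb = false := by revert hc; cases u.fb <;> simp
      have hav : v.fa = false := by revert hc; cases v.fa <;> simp
      have hu : u.letters ≠ [] := letters_ne_nil_of_fb hbu
      have hv : v.letters ≠ [] := letters_ne_nil_of_fa hav
      rw [coreL_merge f g0 hu hv, hbu, hav]
      show _ = eF g0 u.fa * coreL f g0 u.letters * 1 * (1 * coreL f g0 v.letters * eF g0 v.fb)
      simp [mul_assoc]

lemma liftHom_jS (f : S →ₙ* U) (g0 : U) (hg : g0 * g0 = g0) (s : S) :
    liftHom f g0 hg (jS s) = ↑(f s) := by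
  show eF g0 false * coreL f g0 [s] * eF g0 false = _
  simp [eF, coreL]

lemma liftHom_e (f : S →ₙ* U) (g0 : U) (hg : g0 * g0 = g0) :
    liftHom f g0 hg M.e = ↑g0 := by
  show eF g0 true * coreL f g0 [] * eF g0 true = _
  simp only [eF, coreL, cond_true, mul_one]
  rw [← WithOne.coe_mul, hg]

end M
end FPAux
namespace FPAux

variable {S : Type} [Semigroup S]

/-- Truncation of `M S` at `k` letters, with a zero adjoined. -/
abbrev Tk (S : Type) [Semigroup S] (k : ℕ) : Type := Option {m : M S // M.len m ≤ k}

def ok (k : ℕ) (m : M S) : Tk S k :=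
  if h : M.len m ≤ k then some ⟨m, h⟩ else none

lemma ok_pos {k : ℕ} {m : M S} (h : M.len m ≤ k) : ok k m = some ⟨m, h⟩ := dif_pos h
lemma ok_neg {k : ℕ} {m : M S} (h : ¬ M.len m ≤ k) : ok k m = none := dif_neg h

def tmul {k : ℕ} : Tk S k → Tk S k → Tk S k
  | some a, some b => ok k (a.1 * b.1)
  | _, _ => none

instance {k : ℕ} : Mul (Tk S k) := ⟨tmul⟩

lemma mul_none_left {k : ℕ} (y : Tk S k) : (none : Tk S k) * y = none := by
  cases y <;> rfl

lemma mul_none_right {k : ℕ} (x : Tk S k) : x * (none : Tk S k) = none := by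
  cases x <;> rfl

lemma some_mul_some {k : ℕ} (x : M S) (hx : M.len x ≤ k) (y : M S) (hy : M.len y ≤ k) :
    (some ⟨x, hx⟩ : Tk S k) * some ⟨y, hy⟩ = ok k (x * y) := rfl

instance {k : ℕ} : Semigroup (Tk S k) where
  mul_assoc x y z := by
    obtain _ | ⟨a, ha⟩ := x
    · simp only [mul_none_left]
    obtain _ | ⟨b, hb⟩ := y
    · simp only [mul_none_left, mul_none_right]
    obtain _ | ⟨c, hc⟩ := z
    · simp only [mul_none_right]
    rw [some_mul_some a ha b hb, some_mul_some b hb c hc]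
    by_cases h1 : M.len (a * b) ≤ k
    · rw [ok_pos h1, some_mul_some (a*b) h1 c hc]
      by_cases h2 : M.len (b * c) ≤ k
      · rw [ok_pos h2, some_mul_some a ha (b*c) h2, mul_assoc]
      · rw [ok_neg h2, mul_none_right]
        refine ok_neg ?_
        have h3 := M.len_le_len_mul_right a (b * c)
        rw [← mul_assoc] at h3
        omega
    · rw [ok_neg h1, mul_none_left]
      by_cases h2 : M.len (b * c) ≤ k
      · rw [ok_pos h2, some_mul_some a ha (b*c) h2]
        refine (ok_neg ?_).symm
        have h3 := M.len_le_len_mul_left (a * b) c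
        rw [mul_assoc] at h3
        omega
      · rw [ok_neg h2, mul_none_right]

/-- the truncation homomorphism -/
def okHom (k : ℕ) : M S →ₙ* Tk S k where
  toFun := ok k
  map_mul' u v := by
    show ok k (u * v) = ok k u * ok k v
    by_cases hu : M.len u ≤ k
    · by_cases hv : M.len v ≤ k
      · rw [ok_pos hu, ok_pos hv, some_mul_some u hu v hv]
      · rw [ok_neg hv, mul_none_right]
        exact ok_neg (by have := M.len_le_len_mul_right u v; omega)
    · rw [ok_neg hu, mul_none_left]
      exact ok_neg (by have := M.len_le_len_mul_left u v; omega)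

lemma ok_inj {k : ℕ} {u v : M S} (hu : M.len u ≤ k) (hv : M.len v ≤ k)
    (h : ok k u = ok k v) : u = v := by
  rw [ok_pos hu, ok_pos hv] at h
  exact congrArg Subtype.val (Option.some.inj h)

lemma finTk [Finite S] (k : ℕ) : Finite (Tk S k) := by
  have h0 : Finite {l : List S // l.length ≤ k} := (List.finite_length_le S k).to_subtype
  have hf : Finite {m : M S // M.len m ≤ k} := by
    apply Finite.of_injective (β := Bool × {l : List S // l.length ≤ k} × Bool)
      (fun m => (m.1.fa, ⟨m.1.letters, m.2⟩, m.1.fb))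
    intro x y h
    simp only [Prod.mk.injEq, Subtype.mk.injEq] at h
    exact Subtype.ext (M.ext_of h.1 (congrArg Subtype.val h.2.1) h.2.2)
  exact Finite.of_equiv _ (Equiv.optionEquivSumPUnit.{0,0} _).symm

def resFun (k : ℕ) : Tk S (k+1) → Tk S k
  | none => none
  | some a => ok k a.1

lemma resFun_none (k : ℕ) : resFun (S := S) k none = none := rfl
lemma resFun_some (k : ℕ) (x : M S) (hx : M.len x ≤ k + 1) :
    resFun k (some ⟨x, hx⟩) = ok k x := rfl

/-- restriction homomorphism `T_{k+1} → T_k` -/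
def resHom (k : ℕ) : Tk S (k+1) →ₙ* Tk S k where
  toFun := resFun k
  map_mul' x y := by
    show resFun k (x * y) = resFun k x * resFun k y
    obtain _ | ⟨a, ha⟩ := x
    · rw [mul_none_left, resFun_none, mul_none_left]
    obtain _ | ⟨b, hb⟩ := y
    · rw [mul_none_right, resFun_none, mul_none_right]
    rw [some_mul_some a ha b hb, resFun_some k a ha, resFun_some k b hb]
    by_cases h1 : M.len (a * b) ≤ k + 1
    · rw [ok_pos h1, resFun_some k (a*b) h1]
      exact (okHom k).map_mul' a b
    · rw [ok_neg h1, resFun_none]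
      by_cases ha' : M.len a ≤ k
      · by_cases hb' : M.len b ≤ k
        · rw [ok_pos ha', ok_pos hb', some_mul_some a ha' b hb']
          exact (ok_neg (by omega)).symm
        · rw [ok_neg hb', mul_none_right]
      · rw [ok_neg ha', mul_none_left]

lemma resHom_apply (k : ℕ) (x : Tk S (k+1)) : resHom k x = resFun k x := rfl

lemma resHom_surj (k : ℕ) : Function.Surjective (resHom (S := S) k) := by
  intro t
  obtain _ | ⟨a, ha⟩ := t
  · exact ⟨none, rfl⟩
  · exact ⟨some ⟨a, ha.trans (Nat.le_succ k)⟩, by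
      rw [resHom_apply, resFun_some k a _, ok_pos ha]⟩

end FPAux
namespace FPAux

/-! Boolean semilattices -/

def BOr : Type := Bool

instance : Mul BOr := ⟨fun a b => Bool.or a b⟩
instance : Semigroup BOr := ⟨fun a b c => Bool.or_assoc a b c⟩
instance : Finite BOr := inferInstanceAs (Finite Bool)

lemma BOr.mul_def (a b : BOr) : a * b = Bool.or a b := rfl

def BAnd : Type := Bool

instance : Mul BAnd := ⟨fun a b => Bool.and a b⟩
instance : Semigroup BAnd := ⟨fun a b c => Bool.and_assoc a b c⟩
instance : Finite BAnd := inferInstanceAs (Finite Bool)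

lemma BAnd.mul_def (a b : BAnd) : a * b = Bool.and a b := rfl

section Var

variable (V : Pseudovariety)

lemma memBOr (hSl : ContainsSl V) : V.Mem BOr :=
  hSl BOr (fun a b => Bool.or_comm a b) (fun a => Bool.or_self a)

lemma memBAnd (hSl : ContainsSl V) : V.Mem BAnd :=
  hSl BAnd (fun a b => Bool.and_comm a b) (fun a => Bool.and_self a)

lemma memProd2 {X Y : Type} [Semigroup X] [Semigroup Y] (hx : V.Mem X) (hy : V.Mem Y) :
    V.Mem (X × Y) := by
  let G : Bool → Type := fun b => cond b X Y
  letI instG : ∀ b, Semigroup (G b) := fun b => by cases b <;> (dsimp [G]; infer_instance)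
  haveI : Finite Bool := inferInstance
  have hpi : V.Mem (∀ b, G b) := by
    apply V.closed_prod Bool G
    intro b
    cases b
    · exact hy
    · exact hx
  apply V.closed_sub _ _ (⟨fun p => fun b => (Bool.rec p.2 p.1 b : G b), ?_⟩ : (X × Y) →ₙ* (∀ b, G b)) hpi
  · intro p q h
    have h1 := congrFun h true
    have h2 := congrFun h false
    exact Prod.ext h1 h2
  · intro p q
    funext b
    cases b <;> rfl

variable {S : Type} [Semigroup S] [Finite S]

lemma finiteOption {α : Type} [Finite α] : Finite (Option α) :=
  Finite.of_equiv _ (Equiv.optionEquivSumPUnit.{0,0} _).symm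

lemma memWithZero (hSl : ContainsSl V) (hS : V.Mem S) : V.Mem (WithZero S) := by
  by_cases hne : Nonempty S
  · obtain ⟨s0⟩ := hne
    refine V.closed_hom (S × BAnd) (WithZero S)
      (⟨fun p => bif (p.2 : Bool) then (p.1 : WithZero S) else 0, ?_⟩) (memProd2 V hS (memBAnd V hSl)) ?_
    · rintro ⟨a, x⟩ ⟨b, y⟩
      show (bif Bool.and x y then ((a*b : S) : WithZero S) else 0) = _
      cases x <;> cases y <;> simp
    · intro z
      induction z using WithZero.recZeroCoe with
      | zero => exact ⟨(s0, false), rfl⟩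
      | coe s => exact ⟨(s, true), rfl⟩
  · haveI : IsEmpty S := not_nonempty_iff.mp hne
    have hsub : ∀ x : WithZero S, x = 0 := by
      intro x
      induction x using WithZero.recZeroCoe with
      | zero => rfl
      | coe s => exact isEmptyElim s
    haveI : Finite (WithZero S) := finiteOption
    exact hSl (WithZero S) (fun x y => by rw [hsub (x*y), hsub (y*x)])
      (fun x => by rw [hsub (x*x), hsub x])

end Var

/-! Nilpotency helpers -/

lemma nilpotent_of_subsingleton {X : Type} [Semigroup X] (A : Subsemigroup X)
    (h1 : ∃ z, z ∈ A) (h2 : ∀ x y : A, x = y) : IsNilpotentSgr A := by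
  obtain ⟨z, hz⟩ := h1
  exact ⟨⟨z, hz⟩, fun x => ⟨h2 _ _, h2 _ _⟩, 0, fun x _ => h2 x _⟩

lemma nilpotent_of_square {X : Type} [Semigroup X] (A : Subsemigroup X) (z : X) (hz : z ∈ A)
    (habs : ∀ x ∈ A, z * x = z ∧ x * z = z)
    (hsq : ∀ x ∈ A, ∀ y ∈ A, x * y = z) : IsNilpotentSgr A := by
  refine ⟨⟨z, hz⟩, fun x => ⟨Subtype.ext (habs x.1 x.2).1, Subtype.ext (habs x.1 x.2).2⟩, 1, ?_⟩
  rintro x ⟨a, y, -, rfl⟩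
  exact Subtype.ext (hsq a.1 a.2 y.1 y.2)

lemma nilpotent_of_cube {X : Type} [Semigroup X] (A : Subsemigroup X) (z : X) (hz : z ∈ A)
    (habs : ∀ x ∈ A, z * x = z ∧ x * z = z)
    (hcube : ∀ x ∈ A, ∀ y ∈ A, ∀ w ∈ A, x * (y * w) = z) : IsNilpotentSgr A := by
  refine ⟨⟨z, hz⟩, fun x => ⟨Subtype.ext (habs x.1 x.2).1, Subtype.ext (habs x.1 x.2).2⟩, 2, ?_⟩
  rintro x ⟨a, y, hy, rfl⟩
  obtain ⟨b, c, -, rfl⟩ := hy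
  exact Subtype.ext (hcube a.1 a.2 b.1 b.2 c.1 c.2)

end FPAux
namespace FPAux

variable {S : Type} [Semigroup S]

def pi1M : M S → WithZero S
  | M.e => 0
  | M.w a s t b => if (a || b || !t.isEmpty) = true then 0 else ↑s

def hasEM : M S → BOr
  | M.e => true
  | M.w a _ t b => a || b || !t.isEmpty

def gamM : M S → BOr
  | M.e => false
  | M.w _ _ _ _ => true

def psiF : Tk S 1 → (WithZero S × BOr × BOr)
  | none => (0, true, true)
  | some a => (pi1M a.1, hasEM a.1, gamM a.1)

lemma shape1 {m : M S} (h : M.len m ≤ 1) : m = M.e ∨ ∃ a s b, m = M.w a s [] b := by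
  cases m with
  | e => exact Or.inl rfl
  | w a s t b =>
    right
    have h1 : t.length + 1 ≤ 1 := h
    have h2 : t = [] := List.eq_nil_of_length_eq_zero (by omega)
    subst h2
    exact ⟨a, s, b, rfl⟩

def psi0 : Tk S 1 →ₙ* (WithZero S × BOr × BOr) where
  toFun := psiF
  map_mul' x y := by
    show psiF (x * y) = psiF x * psiF y
    obtain _ | ⟨m, hm⟩ := x
    · rw [mul_none_left]; rfl
    obtain _ | ⟨m', hm'⟩ := y
    · rw [mul_none_right]
      rcases shape1 hm with rfl | ⟨a, s, b, rfl⟩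
      · rfl
      · cases a <;> cases b <;> rfl
    rw [some_mul_some m hm m' hm']
    rcases shape1 hm with rfl | ⟨a, s, b, rfl⟩ <;>
      rcases shape1 hm' with rfl | ⟨a', s', b', rfl⟩
    · rfl
    · cases a' <;> cases b' <;> rfl
    · cases a <;> cases b <;> rfl
    · cases a <;> cases b <;> cases a' <;> cases b' <;> rfl

lemma psiF_eq_e {x : Tk S 1} (h : psiF x = ((0 : WithZero S), (true : BOr), (false : BOr))) :
    ∃ hh : M.len (M.e : M S) ≤ 1, x = some ⟨M.e, hh⟩ := by
  obtain _ | ⟨m, hm⟩ := x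
  · exact absurd h (by intro hh; cases hh)
  · rcases shape1 hm with rfl | ⟨a, s, b, rfl⟩
    · exact ⟨hm, rfl⟩
    · exact absurd h (by cases a <;> cases b <;> intro hh <;> cases hh)

lemma psiF_eq_s {x : Tk S 1} {s0 : S}
    (h : psiF x = ((s0 : WithZero S), (false : BOr), (true : BOr))) :
    ∃ hh : M.len (M.w false s0 [] false) ≤ 1, x = some ⟨M.w false s0 [] false, hh⟩ := by
  obtain _ | ⟨m, hm⟩ := x
  · exact absurd h (by intro hh; cases hh)
  · rcases shape1 hm with rfl | ⟨a, s, b, rfl⟩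
    · exact absurd h (by intro hh; cases hh)
    · cases a <;> cases b <;>
        simp only [psiF, pi1M, hasEM, gamM, Prod.ext_iff] at h ⊢
      case false.false =>
        obtain rfl : s = s0 := WithZero.coe_inj.mp (by simpa using congrArg Prod.fst h)
        exact ⟨hm, rfl⟩
      case false.true => exact absurd h (by intro hh; cases hh)
      case true.false => exact absurd h (by intro hh; cases hh)
      case true.true => exact absurd h (by intro hh; cases hh)

lemma psiF_eq_z {x : Tk S 1}
    (h : psiF x = ((0 : WithZero S), (true : BOr), (true : BOr))) :
    x = none ∨ ∃ a s b, (a || b) = true ∧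
      ∃ hh : M.len (M.w a s [] b) ≤ 1, x = some ⟨M.w a s [] b, hh⟩ := by
  obtain _ | ⟨m, hm⟩ := x
  · exact Or.inl rfl
  · rcases shape1 hm with rfl | ⟨a, s, b, rfl⟩
    · exact absurd h (by intro hh; cases hh)
    · right
      refine ⟨a, s, b, ?_, hm, rfl⟩
      by_contra hab
      have hab' : (a || b) = false := by revert hab; cases a <;> cases b <;> simp
      obtain ⟨rfl, rfl⟩ : a = false ∧ b = false := by
        revert hab'; cases a <;> cases b <;> simp
      exact absurd h (by intro hh; cases hh)

lemma prod_two {x y : Tk S 1}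
    (hx : psiF x = ((0 : WithZero S), (true : BOr), (true : BOr)))
    (hy : psiF y = ((0 : WithZero S), (true : BOr), (true : BOr))) :
    x * y = none ∨ ∃ s'', ∃ hh : M.len (M.w true s'' [] true) ≤ 1,
      x * y = some ⟨M.w true s'' [] true, hh⟩ := by
  rcases psiF_eq_z hx with rfl | ⟨a, s, b, hab, hhx, rfl⟩
  · exact Or.inl (mul_none_left y)
  rcases psiF_eq_z hy with rfl | ⟨a', s', b', hab', hhy, rfl⟩
  · exact Or.inl (mul_none_right _)
  rw [some_mul_some _ hhx _ hhy]
  cases b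
  · cases a'
    · -- merge case : a = true, b' = true
      obtain rfl : a = true := by revert hab; cases a <;> simp
      obtain rfl : b' = true := by revert hab'; cases b' <;> simp
      right
      refine ⟨s * s', by simp [M.len, M.letters], ?_⟩
      rw [M.mul_ww, if_neg (by simp)]
      exact ok_pos (by simp [M.wcons, merge, M.len, M.letters])
    · rw [M.mul_ww, if_pos (by simp)]
      exact Or.inl (ok_neg (by simp [M.len, M.letters]))
  · rw [M.mul_ww, if_pos (by simp)]
    exact Or.inl (ok_neg (by simp [M.len, M.letters]))

lemma prod_three {x y z : Tk S 1}
    (hx : psiF x = ((0 : WithZero S), (true : BOr), (true : BOr)))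
    (hy : psiF y = ((0 : WithZero S), (true : BOr), (true : BOr)))
    (hz : psiF z = ((0 : WithZero S), (true : BOr), (true : BOr))) :
    x * (y * z) = none := by
  rcases prod_two hy hz with h | ⟨s'', hh, h⟩
  · rw [h, mul_none_right]
  rw [h]
  rcases psiF_eq_z hx with rfl | ⟨a, s, b, hab, hhx, rfl⟩
  · exact mul_none_left _
  rw [some_mul_some _ hhx _ hh, M.mul_ww, if_pos (by simp)]
  exact ok_neg (by simp [M.len, M.letters])

variable (V : Pseudovariety)

lemma gen1 (hSl : ContainsSl V) (hS : V.Mem S) : NMalcevGen V (Tk S 1) := by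
  haveI : Finite S := V.finite S hS
  haveI : Finite (Tk S 1) := finTk 1
  have memW : V.Mem (WithZero S × BOr × BOr) :=
    memProd2 V (memWithZero V hSl hS) (memProd2 V (memBOr V hSl) (memBOr V hSl))
  refine ⟨inferInstance, ⟨⟨↥(psi0 (S := S)).srange,
    V.closed_sub _ _ (MulMemClass.subtype (psi0 (S := S)).srange) memW Subtype.coe_injective⟩,
    (psi0 (S := S)).srangeRestrict, MulHom.srangeRestrict_surjective _, ?_⟩⟩
  intro v hv
  have hmem : ∀ x : Tk S 1,
      x ∈ fiberSub (MulHom.srangeRestrict psi0) v hv ↔ psiF x = v.1 := by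
    intro x
    constructor
    · intro h
      have h' : psi0.srangeRestrict x = v := h
      have := congrArg Subtype.val h'
      rwa [MulHom.coe_srangeRestrict] at this
    · intro h
      show psi0.srangeRestrict x = v
      exact Subtype.ext (by rw [MulHom.coe_srangeRestrict]; exact h)
  have key : v.1 = ((0 : WithZero S), (true : BOr), (true : BOr)) →
      IsNilpotentSgr (fiberSub (MulHom.srangeRestrict psi0) v hv) := by
    intro hZ
    apply nilpotent_of_cube _ none ((hmem none).mpr (by rw [hZ]; rfl))
    · intro x hx
      exact ⟨mul_none_left x, mul_none_right x⟩
    · intro x hx y hy w hw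
      exact prod_three (hZ ▸ (hmem x).mp hx) (hZ ▸ (hmem y).mp hy) (hZ ▸ (hmem w).mp hw)
  obtain ⟨x₀, hx₀⟩ := MulHom.mem_srange.mp v.2
  obtain _ | ⟨m, hm⟩ := x₀
  · exact key (by rw [← hx₀]; rfl)
  rcases shape1 hm with rfl | ⟨a, s, b, rfl⟩
  · -- v.1 = (0, true, false) : fiber is {e}
    have hZ : v.1 = ((0 : WithZero S), (true : BOr), (false : BOr)) := by rw [← hx₀]; rfl
    apply nilpotent_of_subsingleton
    · exact ⟨some ⟨M.e, hm⟩, (hmem _).mpr (by rw [hZ]; rfl)⟩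
    · intro x y
      obtain ⟨h1, e1⟩ := psiF_eq_e (hZ ▸ (hmem x.1).mp x.2)
      obtain ⟨h2, e2⟩ := psiF_eq_e (hZ ▸ (hmem y.1).mp y.2)
      exact Subtype.ext (e1.trans e2.symm)
  · by_cases hab : (a || b) = true
    · refine key ?_
      rw [← hx₀]
      show (pi1M (M.w a s [] b), hasEM (M.w a s [] b), gamM (M.w a s [] b)) = _
      simp [pi1M, hasEM, gamM, hab]
      rfl
    · obtain ⟨rfl, rfl⟩ : a = false ∧ b = false := by
        revert hab; cases a <;> cases b <;> simp
      have hZ : v.1 = ((s : WithZero S), (false : BOr), (true : BOr)) := by rw [← hx₀]; rfl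
      apply nilpotent_of_subsingleton
      · exact ⟨some ⟨M.w false s [] false, hm⟩, (hmem _).mpr (by rw [hZ]; rfl)⟩
      · intro x y
        obtain ⟨h1, e1⟩ := psiF_eq_s (hZ ▸ (hmem x.1).mp x.2)
        obtain ⟨h2, e2⟩ := psiF_eq_s (hZ ▸ (hmem y.1).mp y.2)
        exact Subtype.ext (e1.trans e2.symm)

lemma genStep [Finite S] {k : ℕ} (hmemk : V.Mem (Tk S (k+1))) :
    NMalcevGen V (Tk S (k+2)) := by
  haveI : Finite (Tk S (k+2)) := finTk _
  refine ⟨inferInstance, ⟨⟨Tk S (k+1), hmemk⟩, resHom (k+1), resHom_surj _, ?_⟩⟩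
  intro t ht
  have hmem : ∀ x : Tk S (k+2),
      x ∈ fiberSub (resHom (k+1)) t ht ↔ resFun (k+1) x = t := fun x => Iff.rfl
  obtain _ | a := t
  · apply nilpotent_of_square _ none ((hmem none).mpr rfl)
    · intro x hx
      exact ⟨mul_none_left x, mul_none_right x⟩
    · intro x hx y hy
      obtain _ | ⟨mx, hmx⟩ := x
      · exact mul_none_left y
      obtain _ | ⟨my, hmy⟩ := y
      · exact mul_none_right _
      have h1 : ¬ M.len mx ≤ k + 1 := by
        intro hle
        have := (hmem _).mp hx
        rw [resFun_some, ok_pos hle] at this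
        exact nomatch this
      have h2 : ¬ M.len my ≤ k + 1 := by
        intro hle
        have := (hmem _).mp hy
        rw [resFun_some, ok_pos hle] at this
        exact nomatch this
      rw [some_mul_some mx hmx my hmy]
      refine ok_neg ?_
      have := M.len_mul_ge mx my
      omega
  · apply nilpotent_of_subsingleton
    · exact ⟨some ⟨a.1, a.2.trans (Nat.le_succ _)⟩,
        (hmem _).mpr (by rw [resFun_some, ok_pos a.2])⟩
    · have key : ∀ z : Tk S (k+2), resFun (k+1) z = some a →
          z = some ⟨a.1, a.2.trans (Nat.le_succ _)⟩ := by
        intro z hz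
        obtain _ | ⟨m, hm⟩ := z
        · exact nomatch hz
        · rw [resFun_some] at hz
          by_cases hle : M.len m ≤ k + 1
          · rw [ok_pos hle] at hz
            obtain rfl : m = a.1 := congrArg Subtype.val (Option.some.inj hz)
            rfl
          · rw [ok_neg hle] at hz
            exact nomatch hz
      intro x y
      exact Subtype.ext ((key x.1 ((hmem x.1).mp x.2)).trans
        (key y.1 ((hmem y.1).mp y.2)).symm)

lemma memTkSucc (hSl : ContainsSl V) (hN : NMalcevFixed V) (hS : V.Mem S) :
    ∀ n, V.Mem (Tk S (n+1)) := by
  haveI : Finite S := V.finite S hS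
  intro n
  induction n with
  | zero =>
    haveI : Finite (Tk S 1) := finTk 1
    exact (hN (Tk S 1)).mpr (fun U hU => hU _ (gen1 V hSl hS))
  | succ k ih =>
    haveI : Finite (Tk S (k+2)) := finTk _
    exact (hN _).mpr (fun U hU => hU _ (genStep V ih))

end FPAux
/-- If `Sl ⊆ V` and `N ⓜ V = V`, then for a member `S` of `V` and a
one-element semigroup `{e}`, the natural mapping `S * {e} → S ∐^V {e}` is injective. -/
theorem injective_iota_member_and_point (V : Pseudovariety) (hSl : ContainsSl V)
    (hN : NMalcevFixed V) (F : Bool → TopSgr) (hpro : ∀ b, IsProV V (F b))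
    (hmem : V.Mem (F true).carrier)
    (h1 : Nonempty (F false).carrier) (h2 : Subsingleton (F false).carrier)
    (P : Type) [Semigroup P] (e : ∀ b, (F b).carrier →ₙ* P)
    (hP : IsFreeProduct (fun b => (F b).carrier) P e)
    (C : TopSgr) (φ : ∀ b, (F b).carrier →ₙ* C.carrier) (hC : IsCoproduct V F C φ)
    (ι : P →ₙ* C.carrier) (hι : ∀ b, ι.comp (e b) = φ b) :
    Function.Injective ⇑ι := by
  classical
  set Sc := (F true).carrier with hSc
  haveI hfinS : Finite Sc := V.finite _ hmem
  -- canonical homomorphisms into the word model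
  let jh : ∀ b, (F b).carrier →ₙ* FPAux.M Sc := fun b =>
    match b with
    | true => FPAux.M.jS
    | false => ⟨fun _ => FPAux.M.e, fun _ _ => (FPAux.M.mul_ee).symm⟩
  obtain ⟨Φ, hΦ, -⟩ := hP.universal (FPAux.M Sc) jh
  -- Φ is injective
  have hΦinj : Function.Injective ⇑Φ := by
    have ε := h1.some
    set gl : P := e false ε with hgl
    have hg : gl * gl = gl := by
      rw [hgl, ← map_mul]
      exact congrArg (e false) (Subsingleton.elim _ _)
    set Ξ : FPAux.M Sc →ₙ* WithOne P := FPAux.M.liftHom (e true) gl hg with hΞ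
    let coeP : P →ₙ* WithOne P := ⟨fun p => ↑p, fun x y => WithOne.coe_mul x y⟩
    obtain ⟨Q, -, hQu⟩ := hP.universal (WithOne P) (fun b => coeP.comp (e b))
    have hc1 : coeP = Q := hQu coeP (fun b => rfl)
    have hc2 : Ξ.comp Φ = Q := by
      apply hQu
      intro b
      rw [MulHom.comp_assoc, hΦ b]
      cases b
      · refine MulHom.ext fun x => ?_
        show Ξ FPAux.M.e = ↑(e false x)
        rw [hΞ, FPAux.M.liftHom_e, hgl]
        exact congrArg (fun y => (↑(e false y) : WithOne P)) (Subsingleton.elim ε x)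
      · refine MulHom.ext fun x => ?_
        show Ξ (FPAux.M.jS x) = ↑(e true x)
        rw [hΞ, FPAux.M.liftHom_jS]
    intro p q hpq
    have e1 : (↑p : WithOne P) = Ξ (Φ p) := DFunLike.congr_fun (hc1.trans hc2.symm) p
    have e2 : (↑q : WithOne P) = Ξ (Φ q) := DFunLike.congr_fun (hc1.trans hc2.symm) q
    exact WithOne.coe_inj.mp (by rw [e1, e2, hpq])
  -- now the separation argument
  intro p q hpq
  set k : ℕ := max (FPAux.M.len (Φ p)) (FPAux.M.len (Φ q)) + 1 with hk
  have hTk : V.Mem (FPAux.Tk Sc k) := FPAux.memTkSucc V hSl hN hmem _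
  haveI hfinT : Finite (FPAux.Tk Sc k) := FPAux.finTk k
  let ψfam : ∀ b, (F b).carrier →ₙ* FPAux.Tk Sc k := fun b => (FPAux.okHom k).comp (jh b)
  -- the target as a pro-V semigroup
  haveI hdisc : DiscreteTopology (discTopSgr (FPAux.Tk Sc k)).carrier := ⟨rfl⟩
  haveI hfinT' : Finite (discTopSgr (FPAux.Tk Sc k)).carrier := hfinT
  have hproT : IsProV V (discTopSgr (FPAux.Tk Sc k)) := by
    refine ⟨?_, ?_, ?_, ?_⟩
    · exact Finite.compactSpace
    · infer_instance
    · exact ⟨continuous_of_discreteTopology⟩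
    · intro x y hxy
      exact ⟨⟨FPAux.Tk Sc k, hTk⟩, MulHom.id (FPAux.Tk Sc k), continuous_bot, hxy⟩
  have hcont : ∀ b, @Continuous (F b).carrier (FPAux.Tk Sc k) _ ⊥ ⇑(ψfam b) := by
    intro b
    cases b
    · have hconst : ⇑(ψfam false) = Function.const _ (ψfam false h1.some) :=
        funext fun x => congrArg _ (Subsingleton.elim x h1.some)
      rw [hconst]
      exact @continuous_const _ _ _ ⊥ _
    · haveI : T2Space (F true).carrier := (hpro true).2.1
      haveI : DiscreteTopology (F true).carrier := Finite.instDiscreteTopology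
      exact @continuous_of_discreteTopology _ _ _ _ ⊥ _
  obtain ⟨Ψ, ⟨hΨc, hΨφ⟩, -⟩ := hC.universal (discTopSgr (FPAux.Tk Sc k)) hproT ψfam
    (fun b => hcont b)
  obtain ⟨Q2, -, hQ2u⟩ := hP.universal (FPAux.Tk Sc k) ψfam
  have hc1 : Ψ.comp ι = Q2 := by
    apply hQ2u
    intro b
    show Ψ.comp (ι.comp (e b)) = ψfam b
    rw [hι b]
    exact hΨφ b
  have hc2 : (FPAux.okHom k).comp Φ = Q2 := by
    apply hQ2u
    intro b
    rw [MulHom.comp_assoc, hΦ b]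
  have heq : FPAux.ok k (Φ p) = FPAux.ok k (Φ q) := by
    have e1 : Ψ (ι p) = FPAux.ok k (Φ p) := DFunLike.congr_fun (hc1.trans hc2.symm) p
    have e2 : Ψ (ι q) = FPAux.ok k (Φ q) := DFunLike.congr_fun (hc1.trans hc2.symm) q
    rw [← e1, ← e2, hpq]
  have hlp : FPAux.M.len (Φ p) ≤ k := by omega
  have hlq : FPAux.M.len (Φ q) ≤ k := by omega
  exact hΦinj (FPAux.ok_inj hlp hlq heq)
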